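/- For q ≥ 3 and n ≥ 2, the sum of (P_{i,n} − P_{i-1,n}) over all integers i with 2 ≤ i ≤ q such that i−1 divides q−1 equals q^n − 2(q−1)^n + (q−2)^n. -/
import Mathlib

open Finset

/-- `P_{i,n}`: the number of sequences `x : Fin n → ℕ` with all entries
`≤ i-1`, minimum entry 0, positive maximum entry, and gcd of entries 1.
(For `i = 1` this is automatically `0`.) -/
noncomputable def pearsonCount (i n : ℕ) : ℕ :=
  Set.ncard {x : Fin n → ℕ |
    (∀ j, x j ≤ i - 1) ∧ (∃ j, x j = 0) ∧ (∃ j, 0 < x j) ∧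
    Finset.univ.gcd x = 1}

/-- Finset model of `pearsonCount`. -/
def pcF (i n : ℕ) : Finset (Fin n → ℕ) :=
  (Fintype.piFinset fun _ : Fin n => Finset.range i).filter
    (fun x => (∃ j, x j = 0) ∧ (∃ j, 0 < x j) ∧ Finset.univ.gcd x = 1)

/-- Sequences with entries `≤ d`, some entry `0`, some entry `= d`, gcd `1`. -/
def pcT (d n : ℕ) : Finset (Fin n → ℕ) :=
  (Fintype.piFinset fun _ : Fin n => Finset.range (d+1)).filter
    (fun x => (∃ j, x j = 0) ∧ (∃ j, x j = d) ∧ Finset.univ.gcd x = 1)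

lemma pearsonCount_eq {i : ℕ} (hi : 1 ≤ i) (n : ℕ) :
    pearsonCount i n = (pcF i n).card := by
  rw [pearsonCount, ← Set.ncard_coe_finset]
  congr 1
  ext x
  simp only [Set.mem_setOf_eq, pcF, coe_filter, Fintype.mem_piFinset, mem_range,
    Nat.lt_iff_le_pred hi]

lemma pcF_subset (d n : ℕ) : pcF d n ⊆ pcF (d+1) n :=
  Finset.filter_subset_filter _
    (Fintype.piFinset_subset _ _ fun _ => Finset.range_subset_range.2 (Nat.le_succ d))

lemma pcF_sdiff (d n : ℕ) (hd : 1 ≤ d) : pcF (d+1) n \ pcF d n = pcT d n := by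
  ext x
  simp only [pcF, pcT, mem_sdiff, mem_filter, Fintype.mem_piFinset, mem_range]
  constructor
  · rintro ⟨⟨h1, h2, h3, h4⟩, h5⟩
    refine ⟨h1, h2, ?_, h4⟩
    by_contra hc
    push_neg at hc
    exact h5 ⟨fun j => lt_of_le_of_ne (Nat.lt_succ_iff.1 (h1 j)) (hc j), h2, h3, h4⟩
  · rintro ⟨h1, h2, ⟨j, hj⟩, h4⟩
    refine ⟨⟨h1, h2, ⟨j, by omega⟩, h4⟩, ?_⟩
    rintro ⟨g1, -⟩
    exact absurd (g1 j) (by omega)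

lemma sum_pcT (m n : ℕ) (hm : 1 ≤ m) :
    ∑ d ∈ m.divisors, (pcT d n).card
      = ((Fintype.piFinset fun _ : Fin n => Finset.range (m+1)).filter
          (fun x => (∃ j, x j = 0) ∧ (∃ j, x j = m))).card := by
  classical
  set t : ℕ → Finset (Fin n → ℕ) :=
    fun d => (pcT d n).image (fun y => fun j => (m / d) * y j) with ht
  have hgcd : ∀ d ∈ m.divisors, ∀ x ∈ t d, Finset.univ.gcd x = m / d := by
    intro d hd x hx
    obtain ⟨y, hy, rfl⟩ := Finset.mem_image.1 hx
    obtain ⟨-, -, -, hgy⟩ := Finset.mem_filter.1 hy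
    have := Finset.gcd_mul_left (s := (Finset.univ : Finset (Fin n))) (f := y) (a := m / d)
    simpa [hgy, normalize_eq] using this
  have hdivpos : ∀ d ∈ m.divisors, 0 < m / d := by
    intro d hd
    rw [Nat.mem_divisors] at hd
    exact Nat.div_pos (Nat.le_of_dvd (by omega) hd.1) (Nat.pos_of_dvd_of_pos hd.1 (by omega))
  have hdisj : ∀ d ∈ m.divisors, ∀ d' ∈ m.divisors, d ≠ d' → Disjoint (t d) (t d') := by
    intro d hd d' hd' hne
    rw [Finset.disjoint_left]
    intro x hx hx'
    have h1 := hgcd d hd x hx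
    have h2 := hgcd d' hd' x hx'
    rw [Nat.mem_divisors] at hd hd'
    have : d = d' := by
      rw [← Nat.div_div_self hd.1 hd.2, ← Nat.div_div_self hd'.1 hd'.2, h1.symm.trans h2]
    exact hne this
  have hcard : ∀ d ∈ m.divisors, (t d).card = (pcT d n).card := by
    intro d hd
    apply Finset.card_image_of_injective
    intro y z hyz
    funext j
    have := congrFun hyz j
    exact Nat.eq_of_mul_eq_mul_left (hdivpos d hd) this
  rw [← Finset.sum_congr rfl hcard, ← Finset.card_biUnion hdisj]
  congr 1
  ext x
  simp only [Finset.mem_biUnion, Finset.mem_filter, Fintype.mem_piFinset, mem_range]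
  constructor
  · rintro ⟨d, hd, hx⟩
    obtain ⟨y, hy, rfl⟩ := Finset.mem_image.1 hx
    obtain ⟨hy1, ⟨j0, hj0⟩, ⟨j1, hj1⟩, -⟩ := Finset.mem_filter.1 hy
    rw [Nat.mem_divisors] at hd
    have hmul : m / d * d = m := Nat.div_mul_cancel hd.1
    refine ⟨?_, ⟨j0, by simp [hj0]⟩, ⟨j1, by show m / d * y j1 = m; rw [hj1]; exact hmul⟩⟩
    intro j
    show m / d * y j < m + 1
    have hle := Fintype.mem_piFinset.1 hy1 j
    rw [mem_range, Nat.lt_succ_iff] at hle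
    have : m / d * y j ≤ m := by
      calc m / d * y j ≤ m / d * d := Nat.mul_le_mul_left _ hle
        _ = m := hmul
    omega
  · rintro ⟨h1, ⟨j0, hj0⟩, ⟨j1, hj1⟩⟩
    set g := Finset.univ.gcd x with hg
    have hgdvd : ∀ j, g ∣ x j := fun j => Finset.gcd_dvd (Finset.mem_univ j)
    have hgm : g ∣ m := hj1 ▸ hgdvd j1
    have hgne : g ≠ 0 := by
      intro h0
      have := Finset.gcd_eq_zero_iff.1 (hg.symm.trans h0) j1 (Finset.mem_univ j1)
      omega
    refine ⟨m / g, Nat.mem_divisors.2 ⟨Nat.div_dvd_of_dvd hgm, by omega⟩, ?_⟩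
    rw [ht]
    apply Finset.mem_image.2
    refine ⟨fun j => x j / g, ?_, ?_⟩
    · apply Finset.mem_filter.2
      refine ⟨Fintype.mem_piFinset.2 fun j => ?_, ⟨j0, by simp [hj0]⟩,
        ⟨j1, by show x j1 / g = m / g; rw [hj1]⟩, ?_⟩
      · rw [mem_range, Nat.lt_succ_iff]
        show x j / g ≤ m / g
        exact Nat.div_le_div_right (Nat.lt_succ_iff.1 (h1 j))
      · exact Finset.gcd_div_eq_one (f := x) (Finset.mem_univ j1) (by omega)
    · funext j
      show m / (m / g) * (x j / g) = x j
      rw [Nat.div_div_self hgm (by omega)]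
      exact Nat.mul_div_cancel' (hgdvd j)

lemma count_T (m n : ℕ) (hm : 2 ≤ m) :
    (((Fintype.piFinset fun _ : Fin n => Finset.range (m+1)).filter
        (fun x => (∃ j, x j = 0) ∧ (∃ j, x j = m))).card : ℤ)
      = ((m : ℤ) + 1) ^ n - 2 * (m : ℤ) ^ n + ((m : ℤ) - 1) ^ n := by
  classical
  obtain ⟨k, rfl⟩ : ∃ k, m = k + 2 := ⟨m - 2, by omega⟩
  have r0 : ((Finset.range (k+2+1)).filter (· ≠ 0)).card = k+2 := by
    have : (Finset.range (k+2+1)).filter (· ≠ 0) = Finset.Icc 1 (k+2) := by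
      ext a; simp; omega
    rw [this]; simp
  have r1 : ((Finset.range (k+2+1)).filter (· ≠ k+2)).card = k+2 := by
    have : (Finset.range (k+2+1)).filter (· ≠ k+2) = Finset.range (k+2) := by
      ext a; simp; omega
    rw [this]; simp
  have r01 : ((Finset.range (k+2+1)).filter (fun a => a ≠ 0 ∧ a ≠ k+2)).card = k+1 := by
    have : (Finset.range (k+2+1)).filter (fun a => a ≠ 0 ∧ a ≠ k+2)
        = Finset.Icc 1 (k+1) := by
      ext a; simp; omega
    rw [this]; simp
  set P : Finset (Fin n → ℕ) := Fintype.piFinset fun _ : Fin n => Finset.range (k+2+1) with hP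
  have cardP : P.card = (k+2+1)^n := by
    rw [hP, Fintype.card_piFinset]
    simp [Finset.card_range]
  have cardA : (P.filter (fun x => ¬ ∃ j, x j = 0)).card = (k+2) ^ n := by
    have : P.filter (fun x => ¬ ∃ j, x j = 0)
        = Fintype.piFinset fun _ : Fin n => (Finset.range (k+2+1)).filter (· ≠ 0) := by
      ext x
      simp only [Finset.mem_filter, Fintype.mem_piFinset, mem_range, hP, not_exists]
      constructor
      · rintro ⟨h1, h2⟩ j; exact ⟨h1 j, h2 j⟩
      · intro h; exact ⟨fun j => (h j).1, fun j => (h j).2⟩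
    rw [this, Fintype.card_piFinset]
    simp [r0]
  have cardB : (P.filter (fun x => ¬ ∃ j, x j = k+2)).card = (k+2) ^ n := by
    have : P.filter (fun x => ¬ ∃ j, x j = k+2)
        = Fintype.piFinset fun _ : Fin n => (Finset.range (k+2+1)).filter (· ≠ k+2) := by
      ext x
      simp only [Finset.mem_filter, Fintype.mem_piFinset, mem_range, hP, not_exists]
      constructor
      · rintro ⟨h1, h2⟩ j; exact ⟨h1 j, h2 j⟩
      · intro h; exact ⟨fun j => (h j).1, fun j => (h j).2⟩
    rw [this, Fintype.card_piFinset]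
    simp [r1]
  have cardAB : (P.filter (fun x => ¬ (∃ j, x j = 0) ∧ ¬ (∃ j, x j = k+2))).card
      = (k+1) ^ n := by
    have : P.filter (fun x => ¬ (∃ j, x j = 0) ∧ ¬ (∃ j, x j = k+2))
        = Fintype.piFinset fun _ : Fin n => (Finset.range (k+2+1)).filter
            (fun a => a ≠ 0 ∧ a ≠ k+2) := by
      ext x
      simp only [Finset.mem_filter, Fintype.mem_piFinset, mem_range, hP, not_exists]
      constructor
      · rintro ⟨h1, h2, h3⟩ j; exact ⟨h1 j, h2 j, h3 j⟩
      · intro h; exact ⟨fun j => (h j).1, fun j => (h j).2.1, fun j => (h j).2.2⟩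
    rw [this, Fintype.card_piFinset]
    simp [r01]
  have s1 := Finset.card_filter_add_card_filter_not
    (s := P) (p := fun x => (∃ j, x j = 0))
  have s2 := Finset.card_filter_add_card_filter_not
    (s := P.filter (fun x => (∃ j, x j = 0))) (p := fun x => (∃ j, x j = k+2))
  have s3 := Finset.card_filter_add_card_filter_not
    (s := P.filter (fun x => ¬ ∃ j, x j = k+2)) (p := fun x => (∃ j, x j = 0))
  simp only [Finset.filter_filter] at s2 s3
  have e1 : P.filter (fun x => (¬ ∃ j, x j = k+2) ∧ ∃ j, x j = 0)
      = P.filter (fun x => (∃ j, x j = 0) ∧ ¬ ∃ j, x j = k+2) := by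
    apply Finset.filter_congr; intro x _; constructor <;> exact fun h => ⟨h.2, h.1⟩
  have e2 : P.filter (fun x => (¬ ∃ j, x j = k+2) ∧ ¬ ∃ j, x j = 0)
      = P.filter (fun x => ¬ (∃ j, x j = 0) ∧ ¬ (∃ j, x j = k+2)) := by
    apply Finset.filter_congr; intro x _; constructor <;> exact fun h => ⟨h.2, h.1⟩
  rw [e1, e2] at s3
  rw [cardP, cardA] at s1
  rw [cardB, cardAB] at s3
  have z1 := congrArg (Nat.cast : ℕ → ℤ) s1
  have z2 := congrArg (Nat.cast : ℕ → ℤ) s2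
  have z3 := congrArg (Nat.cast : ℕ → ℤ) s3
  push_cast at z1 z2 z3 ⊢
  ring_nf at z1 z2 z3 ⊢
  linarith [z1, z2, z3]

/-- For `q ≥ 3` and `n ≥ 2`,
`∑_{2 ≤ i ≤ q, (i-1) ∣ (q-1)} (P_{i,n} - P_{i-1,n}) = q^n - 2(q-1)^n + (q-2)^n`. -/
theorem stmt_8 (q n : ℕ) (hq : 3 ≤ q) (hn : 2 ≤ n) :
    (∑ i ∈ (Finset.Icc 2 q).filter (fun i => (i - 1) ∣ (q - 1)),
        ((pearsonCount i n : ℤ) - (pearsonCount (i - 1) n : ℤ)))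
      = (q : ℤ) ^ n - 2 * ((q : ℤ) - 1) ^ n + ((q : ℤ) - 2) ^ n := by
  classical
  have hm : 2 ≤ q - 1 := by omega
  have hsum : (∑ i ∈ (Finset.Icc 2 q).filter (fun i => (i - 1) ∣ (q - 1)),
        ((pearsonCount i n : ℤ) - (pearsonCount (i - 1) n : ℤ)))
      = ∑ d ∈ (q-1).divisors, ((pcT d n).card : ℤ) := by
    refine Finset.sum_nbij' (i := fun a => a - 1) (j := fun d => d + 1) ?_ ?_ ?_ ?_ ?_
    · intro a ha
      beta_reduce
      rw [Finset.mem_filter, Finset.mem_Icc] at ha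
      exact Nat.mem_divisors.2 ⟨ha.2, by omega⟩
    · intro d hd
      beta_reduce
      rw [Nat.mem_divisors] at hd
      have h1 : 1 ≤ d := Nat.pos_of_dvd_of_pos hd.1 (by omega)
      have h2 : d ≤ q - 1 := Nat.le_of_dvd (by omega) hd.1
      rw [Finset.mem_filter, Finset.mem_Icc]
      exact ⟨⟨by omega, by omega⟩, by simpa using hd.1⟩
    · intro a ha
      beta_reduce
      rw [Finset.mem_filter, Finset.mem_Icc] at ha
      omega
    · intro d hd
      beta_reduce
      simp
    · intro a ha
      beta_reduce
      rw [Finset.mem_filter, Finset.mem_Icc] at ha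
      obtain ⟨⟨ha2, haq⟩, hdvd⟩ := ha
      have hd1 : 1 ≤ a - 1 := by omega
      rw [pearsonCount_eq (by omega : 1 ≤ a) n, pearsonCount_eq hd1 n]
      have hsub := pcF_subset (a-1) n
      have hcs : (pcF ((a-1)+1) n \ pcF (a-1) n).card
          = (pcF ((a-1)+1) n).card - (pcF (a-1) n).card := Finset.card_sdiff_of_subset hsub
      rw [pcF_sdiff (a-1) n hd1] at hcs
      have hle := Finset.card_le_card hsub
      have ha1 : (a-1)+1 = a := by omega
      rw [ha1] at hcs hle
      rw [hcs, Nat.cast_sub hle]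
  rw [hsum]
  have hsum2 : (∑ d ∈ (q-1).divisors, ((pcT d n).card : ℤ))
      = ((∑ d ∈ (q-1).divisors, (pcT d n).card : ℕ) : ℤ) := by push_cast; rfl
  rw [hsum2, sum_pcT (q-1) n (by omega), count_T (q-1) n hm]
  have hq1 : ((q - 1 : ℕ) : ℤ) = (q : ℤ) - 1 := by
    have : (1:ℕ) ≤ q := by omega
    push_cast [this]
    ring
  rw [hq1]
  ring
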